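/- A closed set A in ℝ^d has reach equal to infinity if and only if A is convex (and closed). -/

import Mathlib

open Metric Set Filter
open scoped ENNReal RealInnerProductSpace Topology NNReal

noncomputable section

variable {E : Type*} [NormedAddCommGroup E] [InnerProductSpace ℝ E]

/-- `x` has a unique nearest point in `A`. -/
def UnpPt (A : Set E) (x : E) : Prop :=
  ∃! a, a ∈ A ∧ dist x a = Metric.infDist x A

/-- The reach of `A` at a point `a` (Federer). -/
def locReach (A : Set E) (a : E) : ℝ≥0∞ :=
  ⨆ (r : ℝ≥0) (_ : ∀ x : E, dist x a < (r : ℝ) → UnpPt A x), (r : ℝ≥0∞)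

/-- The (global) reach of `A`. -/
def setReach (A : Set E) : ℝ≥0∞ := ⨅ a ∈ A, locReach A a

/-- The tangent cone of `A` at `a` in the sense of Federer. -/
def Tan (A : Set E) (a : E) : Set E :=
  {u | u = 0 ∨ ∃ (x : ℕ → E) (r : ℕ → ℝ),
    (∀ i, x i ∈ A ∧ x i ≠ a ∧ 0 < r i) ∧
    Tendsto x atTop (nhds a) ∧
    Tendsto (fun i => r i • (x i - a)) atTop (nhds u)}

/-- The normal cone of `A` at `a`: the dual cone of the tangent cone. -/
def Nor (A : Set E) (a : E) : Set E :=
  {u | ∀ v ∈ Tan A a, ⟪u, v⟫ ≤ 0}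

/-- If every point has a unique nearest point, the reach is infinite. -/
lemma setReach_eq_top_of_unp {A : Set E} (h : ∀ x : E, UnpPt A x) :
    setReach A = ⊤ := by
  have hloc : ∀ a : E, locReach A a = ⊤ := by
    intro a
    have : locReach A a = ⨆ (r : ℝ≥0), (r : ℝ≥0∞) := by
      refine iSup_congr fun r => iSup_pos fun x _ => h x
    rw [this, ENNReal.iSup_coe_eq_top]
    simpa using not_bddAbove_univ (α := ℝ≥0)
  simp [setReach, iInf_eq_top, hloc]

/-- If the reach is infinite and `A` is nonempty, every point has a unique nearest point. -/
lemma unp_of_setReach_eq_top {A : Set E} (hA : A.Nonempty) (h : setReach A = ⊤) :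
    ∀ x : E, UnpPt A x := by
  obtain ⟨a, ha⟩ := hA
  have hloc : locReach A a = ⊤ := by
    rw [setReach, iInf_eq_top] at h
    have := h a
    rw [iInf_eq_top] at this
    exact this ha
  intro x
  set M : ℝ≥0 := ⟨dist x a, dist_nonneg⟩ with hM
  have hlt : (M : ℝ≥0∞) < locReach A a := hloc ▸ ENNReal.coe_lt_top
  rw [locReach, lt_iSup_iff] at hlt
  obtain ⟨r, hr⟩ := hlt
  by_cases hc : ∀ x : E, dist x a < (r : ℝ) → UnpPt A x
  · rw [iSup_pos hc, ENNReal.coe_lt_coe] at hr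
    exact hc x (NNReal.coe_lt_coe.2 hr)
  · rw [iSup_neg hc] at hr
    exact absurd hr (by simp)

section Euclidean

variable {d : ℕ}

local notation "V" => EuclideanSpace ℝ (Fin d)

/-- Key inequality: the function `x ↦ ‖x‖² - d(x,A)²` dominates the affine functions
`x ↦ 2⟪x,c⟫ - ‖c‖²` for `c ∈ A`. -/
lemma key_ineq {A : Set V} {c : V} (hc : c ∈ A) (x : V) :
    2 * ⟪x, c⟫ - ‖c‖ ^ 2 ≤ ‖x‖ ^ 2 - infDist x A ^ 2 := by
  have h1 : infDist x A ≤ dist x c := infDist_le_dist_of_mem hc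
  have h0 : (0:ℝ) ≤ infDist x A := infDist_nonneg
  have h2 : infDist x A ^ 2 ≤ dist x c ^ 2 := by nlinarith
  have h3 : dist x c ^ 2 = ‖x‖ ^ 2 - 2 * ⟪x, c⟫ + ‖c‖ ^ 2 := by
    rw [dist_eq_norm, norm_sub_sq_real]
  nlinarith

lemma key_eq {A : Set V} {c : V} {x : V} (hc : c ∈ A) (hd : dist x c = infDist x A) :
    ‖x‖ ^ 2 - infDist x A ^ 2 = 2 * ⟪x, c⟫ - ‖c‖ ^ 2 := by
  have h3 : dist x c ^ 2 = ‖x‖ ^ 2 - 2 * ⟪x, c⟫ + ‖c‖ ^ 2 := by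
    rw [dist_eq_norm, norm_sub_sq_real]
  rw [← hd]; linarith

/-- Motzkin's theorem (one direction): a Chebyshev set in Euclidean space is convex. -/
lemma convex_of_unp {A : Set V} (hA : A.Nonempty) (hclosed : IsClosed A)
    (h : ∀ x : V, UnpPt A x) : Convex ℝ A := by
  classical
  choose P hP hPu using h
  have hPA : ∀ x : V, P x ∈ A := fun x => (hP x).1
  have hPd : ∀ x : V, dist x (P x) = infDist x A := fun x => (hP x).2
  intro a ha b hb s t hs ht hst
  by_contra hy
  set y : V := s • a + t • b with hydef
  set δ : ℝ := infDist y A with hδdef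
  have hδ : 0 < δ := (hclosed.notMem_iff_infDist_pos hA).1 hy
  -- the convex function F
  set F : V → ℝ := fun x => ‖x‖ ^ 2 - infDist x A ^ 2 - 2 * ⟪x, y⟫ with hFdef
  set C : ℝ := s * ‖a‖ ^ 2 + t * ‖b‖ ^ 2 with hCdef
  have hFlb : ∀ x : V, -C ≤ F x := by
    intro x
    have h1 := key_ineq ha x
    have h2 := key_ineq hb x
    have hy' : ⟪x, y⟫ = s * ⟪x, a⟫ + t * ⟪x, b⟫ := by
      rw [hydef, inner_add_right, real_inner_smul_right, real_inner_smul_right]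
    simp only [hFdef, hy']
    nlinarith [mul_le_mul_of_nonneg_left h1 hs, mul_le_mul_of_nonneg_left h2 ht]
  -- the perturbed function G and its minimizer
  set ε : ℝ := δ / 2 with hεdef
  have hε : 0 < ε := by positivity
  set G : V → ℝ := fun x => F x + ε * ‖x - y‖ with hGdef
  have hGcont : Continuous G := by
    have h1 : Continuous fun x : V => infDist x A := continuous_infDist_pt A
    have h2 : Continuous fun x : V => ⟪x, y⟫ :=
      continuous_id.inner continuous_const
    exact (((continuous_norm.pow 2).sub (h1.pow 2)).sub
      (continuous_const.mul h2)).add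
      (continuous_const.mul (continuous_id.sub continuous_const).norm)
  set R : ℝ := (F y + C) / ε + 1 with hRdef
  have hFyC : 0 ≤ F y + C := by linarith [hFlb y]
  have hR : 0 < R := by positivity
  obtain ⟨x₀, hx₀mem, hx₀min⟩ :=
    (isCompact_closedBall y R).exists_isMinOn ⟨y, mem_closedBall_self hR.le⟩
      hGcont.continuousOn
  have hGmin : ∀ z : V, G x₀ ≤ G z := by
    intro z
    by_cases hz : z ∈ closedBall y R
    · exact hx₀min hz
    · have hzout : R < ‖z - y‖ := by
        simpa [dist_eq_norm] using not_le.1 (fun hle => hz (mem_closedBall.2 (by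
          simpa [dist_eq_norm] using hle)))
      have h1 : G x₀ ≤ G y := hx₀min (mem_closedBall_self hR.le)
      have h2 : G y = F y := by simp [hGdef]
      have h3 : -C + ε * ‖z - y‖ ≤ G z := by
        have h5 := hFlb z
        have hGz : G z = F z + ε * ‖z - y‖ := rfl
        linarith
      have h4 : ε * R = F y + C + ε := by
        rw [hRdef]; field_simp
      nlinarith
  have hkey : ∀ z : V, F x₀ - ε * ‖z - x₀‖ ≤ F z := by
    intro z
    have h1 := hGmin z
    have h2 : ‖z - y‖ ≤ ‖z - x₀‖ + ‖x₀ - y‖ := by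
      have := dist_triangle z x₀ y
      simpa [dist_eq_norm] using this
    have h3 : G x₀ = F x₀ + ε * ‖x₀ - y‖ := rfl
    have h4 : G z = F z + ε * ‖z - y‖ := rfl
    nlinarith
  -- gradient-type inequality for F
  have hK2 : ∀ z x : V, F z - F x ≤ 2 * ⟪z - x, P z - y⟫ := by
    intro z x
    have h1 := key_ineq (hPA z) x
    have h2 := key_eq (hPA z) (hPd z)
    have h3 : ⟪z - x, P z - y⟫ = ⟪z, P z⟫ - ⟪z, y⟫ - ⟪x, P z⟫ + ⟪x, y⟫ := by
      rw [inner_sub_left, inner_sub_right, inner_sub_right]; ring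
    have hFz : F z = ‖z‖ ^ 2 - infDist z A ^ 2 - 2 * ⟪z, y⟫ := rfl
    have hFx : F x = ‖x‖ ^ 2 - infDist x A ^ 2 - 2 * ⟪x, y⟫ := rfl
    linarith
  set p : V := P x₀ with hpdef
  have hpy : δ ≤ ‖y - p‖ := by
    have h1 : infDist y A ≤ dist y p := infDist_le_dist_of_mem (hPA x₀)
    rwa [dist_eq_norm] at h1
  have hpylt : (0:ℝ) < ‖y - p‖ := lt_of_lt_of_le hδ hpy
  set u : V := ‖y - p‖⁻¹ • (y - p) with hudef
  have hu : ‖u‖ = 1 := by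
    rw [hudef, norm_smul, norm_inv, norm_norm]
    field_simp
  set tseq : ℕ → ℝ := fun n => 1 / (n + 1) with htseq
  have htpos : ∀ n, 0 < tseq n := fun n => by positivity
  have ht1 : ∀ n, tseq n ≤ 1 := by
    intro n
    show (1:ℝ) / (n + 1) ≤ 1
    rw [div_le_one (by positivity)]
    have : (0:ℝ) ≤ (n:ℝ) := Nat.cast_nonneg n
    linarith
  set z : ℕ → V := fun n => x₀ + tseq n • u with hzdef
  have hzx : ∀ n, ‖z n - x₀‖ = tseq n := by
    intro n
    have : z n - x₀ = tseq n • u := add_sub_cancel_left x₀ _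
    rw [this, norm_smul, hu, mul_one, Real.norm_eq_abs, abs_of_pos (htpos n)]
  have hinner : ∀ n, -ε ≤ 2 * ⟪u, P (z n) - y⟫ := by
    intro n
    have h1 := hkey (z n)
    have h2 := hK2 (z n) x₀
    have h3 : z n - x₀ = tseq n • u := add_sub_cancel_left x₀ _
    have h4 : ⟪z n - x₀, P (z n) - y⟫ = tseq n * ⟪u, P (z n) - y⟫ := by
      rw [h3, real_inner_smul_left]
    have h5 : -ε * tseq n ≤ (2 * ⟪u, P (z n) - y⟫) * tseq n := by
      have h6 := hzx n
      nlinarith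
    exact le_of_mul_le_mul_right h5 (htpos n)
  have hbdd : ∀ n, P (z n) ∈ closedBall x₀ (infDist x₀ A + 2) := by
    intro n
    have h1 : dist (P (z n)) (z n) = infDist (z n) A := by
      rw [dist_comm]; exact hPd (z n)
    have h2 : infDist (z n) A ≤ infDist x₀ A + dist (z n) x₀ :=
      infDist_le_infDist_add_dist
    have h3 : dist (z n) x₀ = tseq n := by rw [dist_eq_norm]; exact hzx n
    have h4 := dist_triangle (P (z n)) (z n) x₀
    rw [mem_closedBall]
    have h5 := ht1 n
    have h6 := htpos n
    linarith
  obtain ⟨L, -, ψ, hψ, hLtendsto⟩ :=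
    tendsto_subseq_of_bounded isBounded_closedBall hbdd
  have hLA : L ∈ A := hclosed.mem_of_tendsto hLtendsto
    (Eventually.of_forall fun n => hPA _)
  have htzero : Tendsto tseq atTop (𝓝 0) := by
    rw [htseq]
    exact tendsto_one_div_add_atTop_nhds_zero_nat
  have htz : Tendsto (fun n => z (ψ n)) atTop (𝓝 x₀) := by
    have h1 : Tendsto z atTop (𝓝 x₀) := by
      have h2 : Tendsto (fun n => tseq n • u) atTop (𝓝 ((0:ℝ) • u)) :=
        htzero.smul tendsto_const_nhds
      rw [zero_smul] at h2
      have h3 := h2.const_add x₀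
      rw [add_zero] at h3
      exact h3
    exact h1.comp hψ.tendsto_atTop
  have hdistL : dist x₀ L = infDist x₀ A := by
    have h1 : Tendsto (fun n => dist (z (ψ n)) (P (z (ψ n)))) atTop (𝓝 (dist x₀ L)) :=
      htz.dist hLtendsto
    have h2 : (fun n => dist (z (ψ n)) (P (z (ψ n)))) =
        fun n => infDist (z (ψ n)) A := funext fun n => hPd _
    rw [h2] at h1
    have h3 : Tendsto (fun n => infDist (z (ψ n)) A) atTop (𝓝 (infDist x₀ A)) :=
      ((continuous_infDist_pt A).tendsto x₀).comp htz
    exact tendsto_nhds_unique h1 h3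
  have hLp : L = p := hPu x₀ L ⟨hLA, hdistL⟩
  have hlim : Tendsto (fun n => 2 * ⟪u, P (z (ψ n)) - y⟫) atTop
      (𝓝 (2 * ⟪u, L - y⟫)) := by
    have h1 : Tendsto (fun n => P (z (ψ n)) - y) atTop (𝓝 (L - y)) :=
      hLtendsto.sub tendsto_const_nhds
    exact ((tendsto_const_nhds (x := u)).inner h1).const_mul 2
  have hge : -ε ≤ 2 * ⟪u, L - y⟫ :=
    ge_of_tendsto hlim (Eventually.of_forall fun n => hinner (ψ n))
  have hval : ⟪u, L - y⟫ = -‖y - p‖ := by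
    rw [hLp]
    have h1 : p - y = -(y - p) := by abel
    rw [hudef, h1, real_inner_smul_left, inner_neg_right,
      real_inner_self_eq_norm_sq]
    field_simp
  rw [hval] at hge
  have : ε = δ / 2 := hεdef
  linarith

end Euclidean

/-- A closed set in ℝ^d has infinite reach iff it is convex. -/
theorem stmt0 {d : ℕ} (A : Set (EuclideanSpace ℝ (Fin d)))
    (hA : A.Nonempty) (hclosed : IsClosed A) :
    setReach A = ⊤ ↔ Convex ℝ A := by
  constructor
  · intro h
    exact convex_of_unp hA hclosed (unp_of_setReach_eq_top hA h)
  · intro hconv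
    refine setReach_eq_top_of_unp fun x => ?_
    obtain ⟨c, hc, hcd⟩ := hclosed.exists_infDist_eq_dist hA x
    refine ⟨c, ⟨hc, hcd.symm⟩, ?_⟩
    rintro b ⟨hbA, hbd⟩
    by_contra hne
    -- midpoint argument
    set m : EuclideanSpace ℝ (Fin d) := (1/2 : ℝ) • b + (1/2 : ℝ) • c with hm
    have hmA : m ∈ A := hconv hbA hc (by norm_num) (by norm_num) (by norm_num)
    have hpar : ‖(x - b) + (x - c)‖ ^ 2 + ‖(x - b) - (x - c)‖ ^ 2
        = 2 * (‖x - b‖ ^ 2 + ‖x - c‖ ^ 2) := by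
      have := parallelogram_law_with_norm ℝ (x - b) (x - c)
      nlinarith [this]
    have h1 : (x - b) + (x - c) = (2:ℝ) • (x - m) := by
      simp [hm]; module
    have h2 : (x - b) - (x - c) = c - b := by abel
    have h3 : ‖(2:ℝ) • (x - m)‖ ^ 2 = 4 * ‖x - m‖ ^ 2 := by
      rw [norm_smul]; simp; ring
    have hcb : 0 < ‖c - b‖ := by
      rw [norm_pos_iff, sub_ne_zero]
      exact fun hcontra => hne hcontra.symm
    have hxm : infDist x A ≤ dist x m := infDist_le_dist_of_mem hmA
    have hdb : dist x b = infDist x A := hbd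
    have hdc : dist x c = infDist x A := hcd.symm
    rw [dist_eq_norm] at hdb hdc hxm
    rw [h1, h2, h3] at hpar
    have hid : 0 ≤ infDist x A := infDist_nonneg
    nlinarith [norm_nonneg (x - m), hpar]

end
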